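/- With A_T having product eigenvectors as above, the evolved state satisfies ρ_S(t) = Σ_{k,m} (ρ_S)_{km} |α_k^S⟩⟨α_m^S| · Σ_n (ρ_P)_{nn} γ_{(k,n)(m,n)}(t); in particular the diagonal entries of ρ_S(t) in the basis {|α_k^S⟩} equal those of ρ_S for all t. -/

import Mathlib

open Complex Matrix Kronecker ComplexOrder

noncomputable section

def outer {n : Type*} [Fintype n] (v w : n → ℂ) : Matrix n n ℂ :=
  fun x y => v x * (starRingEnd ℂ) (w y)

def trP (M : Matrix (Fin 2 × Fin 2) (Fin 2 × Fin 2) ℂ) : Matrix (Fin 2) (Fin 2) ℂ :=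
  fun x y => ∑ c : Fin 2, M (x, c) (y, c)

def melem {n : Type*} [Fintype n] (M : Matrix n n ℂ) (v w : n → ℂ) : ℂ :=
  ∑ x, ∑ y, (starRingEnd ℂ) (v x) * M x y * w y

def gam {ι : Type*} (α : ι → ℝ) (f φ : ℝ → ℝ) (i j : ι) (t : ℝ) : ℂ :=
  Complex.exp (-(((α i - α j) ^ 2 * f t : ℝ) : ℂ)
    + Complex.I * (((α i ^ 2 - α j ^ 2) * φ t : ℝ) : ℂ))

lemma gam_diag {ι : Type*} (α : ι → ℝ) (f φ : ℝ → ℝ) (i : ι) (t : ℝ) :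
    gam α f φ i i t = 1 := by
  simp [gam]

lemma melem_kron (A B : Matrix (Fin 2) (Fin 2) ℂ) (a b c d : Fin 2 → ℂ) :
    melem (A ⊗ₖ B) (fun q : Fin 2 × Fin 2 => a q.1 * b q.2)
      (fun q => c q.1 * d q.2) = melem A a c * melem B b d := by
  simp only [melem, Fintype.sum_prod_type, kroneckerMap_apply, _root_.map_mul,
    Fin.sum_univ_two]
  ring

lemma completeness (vP : Fin 2 → Fin 2 → ℂ)
    (hvP : ∀ k m, (∑ x, (starRingEnd ℂ) (vP k x) * vP m x) = if k = m then 1 else 0)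
    (x y : Fin 2) :
    (∑ n, (starRingEnd ℂ) (vP n x) * vP n y) = if x = y then 1 else 0 := by
  set U : Matrix (Fin 2) (Fin 2) ℂ := Matrix.of fun n x => vP n x with hU
  have h1 : U * Uᴴ = 1 := by
    ext k m
    have := congrArg (starRingEnd ℂ) (hvP k m)
    simp only [map_sum, _root_.map_mul, MonoidWithZeroHom.map_ite_one_zero, Complex.conj_conj] at this
    simp only [Matrix.mul_apply, conjTranspose_apply, hU, Matrix.of_apply, one_apply]
    rw [← this]
    exact Finset.sum_congr rfl fun z _ => by rw [starRingEnd_apply]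
  have h2 : Uᴴ * U = 1 := mul_eq_one_comm.mp h1
  have := congrFun (congrFun h2 x) y
  simp only [Matrix.mul_apply, conjTranspose_apply, hU, Matrix.of_apply, one_apply] at this
  rw [← this]
  exact Finset.sum_congr rfl fun n _ => by rw [starRingEnd_apply]

lemma trP_outer (vS vP : Fin 2 → Fin 2 → ℂ)
    (hvP : ∀ k m, (∑ x, (starRingEnd ℂ) (vP k x) * vP m x) = if k = m then 1 else 0)
    (i j : Fin 2 × Fin 2) :
    trP (outer (fun q : Fin 2 × Fin 2 => vS i.1 q.1 * vP i.2 q.2)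
        (fun q => vS j.1 q.1 * vP j.2 q.2))
      = (if i.2 = j.2 then (1:ℂ) else 0) • outer (vS i.1) (vS j.1) := by
  ext x y
  have h : (∑ c, vP i.2 c * (starRingEnd ℂ) (vP j.2 c)) = if i.2 = j.2 then 1 else 0 := by
    have := congrArg (starRingEnd ℂ) (hvP i.2 j.2)
    simp only [map_sum, _root_.map_mul, MonoidWithZeroHom.map_ite_one_zero, Complex.conj_conj] at this
    rw [← this]
  simp only [trP, outer, Matrix.smul_apply, smul_eq_mul, _root_.map_mul]
  trans (vS i.1 x * (starRingEnd ℂ) (vS j.1 y)) * ∑ c, vP i.2 c * (starRingEnd ℂ) (vP j.2 c)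
  · rw [Finset.mul_sum]; exact Finset.sum_congr rfl fun c _ => by ring
  · rw [h]; ring

lemma melem_outer {n : Type*} [Fintype n] (a b u w : n → ℂ) :
    melem (outer a b) u w
      = (∑ x, (starRingEnd ℂ) (u x) * a x) * (∑ y, (starRingEnd ℂ) (b y) * w y) := by
  simp only [melem, outer]
  rw [Finset.sum_mul_sum]
  exact Finset.sum_congr rfl fun x _ => Finset.sum_congr rfl fun y _ => by ring

lemma melem_sum {n ι : Type*} [Fintype n] (s : Finset ι) (M : ι → Matrix n n ℂ)
    (v w : n → ℂ) : melem (∑ i ∈ s, M i) v w = ∑ i ∈ s, melem (M i) v w := by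
  simp only [melem, Matrix.sum_apply, Finset.mul_sum, Finset.sum_mul]
  trans ∑ x : n, ∑ i ∈ s, ∑ y : n, (starRingEnd ℂ) (v x) * M i x y * w y
  · exact Finset.sum_congr rfl fun x _ => Finset.sum_comm
  · exact Finset.sum_comm

lemma melem_smul {n : Type*} [Fintype n] (c : ℂ) (M : Matrix n n ℂ)
    (v w : n → ℂ) : melem (c • M) v w = c * melem M v w := by
  simp only [melem, Matrix.smul_apply, smul_eq_mul, Finset.mul_sum]
  exact Finset.sum_congr rfl fun x _ => Finset.sum_congr rfl fun y _ => by ring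

lemma sum_melem_diag (vP : Fin 2 → Fin 2 → ℂ)
    (hvP : ∀ k m, (∑ x, (starRingEnd ℂ) (vP k x) * vP m x) = if k = m then 1 else 0)
    (ρP : Matrix (Fin 2) (Fin 2) ℂ) :
    (∑ n, melem ρP (vP n) (vP n)) = ρP.trace := by
  simp only [melem]
  rw [Finset.sum_comm]
  trans ∑ x, ∑ y, ρP x y * ∑ n, (starRingEnd ℂ) (vP n x) * vP n y
  · refine Finset.sum_congr rfl fun x _ => ?_
    rw [Finset.sum_comm]
    refine Finset.sum_congr rfl fun y _ => ?_
    rw [Finset.mul_sum]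
    exact Finset.sum_congr rfl fun n _ => by ring
  · simp only [completeness vP hvP, mul_ite, mul_one, mul_zero]
    simp [Matrix.trace, Matrix.diag]

/-- With A_T having product eigenvectors, the evolved state is
ρ_S(t) = Σ_{k,m} (ρ_S)_{km} |α_k^S⟩⟨α_m^S| Σ_n (ρ_P)_{nn} γ_{(k,n)(m,n)}(t);
in particular its diagonal entries in the basis {|α_k^S⟩} equal those of ρ_S. -/
theorem stmt4 (vS vP : Fin 2 → Fin 2 → ℂ)
    (hvS : ∀ k m, (∑ x, (starRingEnd ℂ) (vS k x) * vS m x) = if k = m then 1 else 0)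
    (hvP : ∀ k m, (∑ x, (starRingEnd ℂ) (vP k x) * vP m x) = if k = m then 1 else 0)
    (α : Fin 2 × Fin 2 → ℝ) (f φ : ℝ → ℝ) (hf : ∀ t, 0 ≤ f t)
    (ρS ρP : Matrix (Fin 2) (Fin 2) ℂ)
    (hρS : ρS.PosSemidef) (hρStr : ρS.trace = 1)
    (hρP : ρP.PosSemidef) (hρPtr : ρP.trace = 1) :
    ∀ t : ℝ,
      (∑ i : Fin 2 × Fin 2, ∑ j : Fin 2 × Fin 2,
        (melem (ρS ⊗ₖ ρP) (fun q => vS i.1 q.1 * vP i.2 q.2)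
            (fun q => vS j.1 q.1 * vP j.2 q.2) * gam α f φ i j t)
          • trP (outer (fun q => vS i.1 q.1 * vP i.2 q.2)
              (fun q => vS j.1 q.1 * vP j.2 q.2)))
      = ∑ k : Fin 2, ∑ m : Fin 2,
          ((melem ρS (vS k) (vS m))
              * ∑ n : Fin 2, melem ρP (vP n) (vP n) * gam α f φ (k, n) (m, n) t)
            • outer (vS k) (vS m) ∧
      ∀ k : Fin 2,
        melem (∑ i : Fin 2 × Fin 2, ∑ j : Fin 2 × Fin 2,
          (melem (ρS ⊗ₖ ρP) (fun q => vS i.1 q.1 * vP i.2 q.2)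
              (fun q => vS j.1 q.1 * vP j.2 q.2) * gam α f φ i j t)
            • trP (outer (fun q => vS i.1 q.1 * vP i.2 q.2)
                (fun q => vS j.1 q.1 * vP j.2 q.2))) (vS k) (vS k)
        = melem ρS (vS k) (vS k) := by
  intro t
  have h1 : (∑ i : Fin 2 × Fin 2, ∑ j : Fin 2 × Fin 2,
        (melem (ρS ⊗ₖ ρP) (fun q => vS i.1 q.1 * vP i.2 q.2)
            (fun q => vS j.1 q.1 * vP j.2 q.2) * gam α f φ i j t)
          • trP (outer (fun q => vS i.1 q.1 * vP i.2 q.2)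
              (fun q => vS j.1 q.1 * vP j.2 q.2)))
      = ∑ i : Fin 2 × Fin 2, ∑ j : Fin 2 × Fin 2,
        (melem ρS (vS i.1) (vS j.1) * melem ρP (vP i.2) (vP j.2) * gam α f φ i j t)
          • ((if i.2 = j.2 then (1:ℂ) else 0) • outer (vS i.1) (vS j.1)) := by
    refine Finset.sum_congr rfl fun i _ => Finset.sum_congr rfl fun j _ => ?_
    rw [melem_kron, trP_outer vS vP hvP]
  have hmain : (∑ i : Fin 2 × Fin 2, ∑ j : Fin 2 × Fin 2,
        (melem (ρS ⊗ₖ ρP) (fun q => vS i.1 q.1 * vP i.2 q.2)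
            (fun q => vS j.1 q.1 * vP j.2 q.2) * gam α f φ i j t)
          • trP (outer (fun q => vS i.1 q.1 * vP i.2 q.2)
              (fun q => vS j.1 q.1 * vP j.2 q.2)))
      = ∑ k : Fin 2, ∑ m : Fin 2,
          ((melem ρS (vS k) (vS m))
              * ∑ n : Fin 2, melem ρP (vP n) (vP n) * gam α f φ (k, n) (m, n) t)
            • outer (vS k) (vS m) := by
    rw [h1]
    ext x y
    simp only [Matrix.sum_apply, Matrix.smul_apply, smul_eq_mul, Fintype.sum_prod_type,
      Fin.sum_univ_two, outer]
    norm_num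
    ring
  refine ⟨hmain, fun k => ?_⟩
  rw [hmain]
  have hout : ∀ a b : Fin 2, melem (outer (vS a) (vS b)) (vS k) (vS k)
      = (if k = a then (1:ℂ) else 0) * (if b = k then (1:ℂ) else 0) := by
    intro a b
    rw [melem_outer, hvS k a, hvS b k]
  simp only [melem_sum, melem_smul, hout]
  have hkk : (∑ a : Fin 2, ∑ b : Fin 2,
      ((melem ρS (vS a) (vS b))
          * ∑ n : Fin 2, melem ρP (vP n) (vP n) * gam α f φ (a, n) (b, n) t)
        * ((if k = a then (1:ℂ) else 0) * (if b = k then (1:ℂ) else 0)))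
      = (melem ρS (vS k) (vS k))
          * ∑ n : Fin 2, melem ρP (vP n) (vP n) * gam α f φ (k, n) (k, n) t := by
    fin_cases k <;> simp [Fin.sum_univ_two]
  rw [hkk]
  simp only [gam_diag, mul_one]
  rw [sum_melem_diag vP hvP, hρPtr, mul_one]
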